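/- Let S_i, S_j : [t_0, t_1] → ℝ be C¹ with S_i(t_0) = S_j(t_0) = 0, S_i(t_1⁻) = θ_i, derivatives satisfying 0 < g_min ≤ S_j' and S_i' ≤ g_max, where g_min := min over all cells of min g, g_max := max over all cells of max g. Then S_j(t_1⁻) ≥ (g_min · min_k θ_k)/g_max. Moreover, if (min_k θ_k · g_min)/(max_k θ_k · g_max) > 1 − (min_{i≠j} Δ_{i,j})/(max_k θ_k), then S_j(t_1⁻) + min_{i≠j} Δ_{i,j} ≥ θ_j. -/

import Mathlib

/-- During an inter-spike interval [t₀,t₁] in which cell i goes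
from 0 to its threshold θ_i with derivative ≤ g_max, any other cell j with
derivative ≥ g_min > 0 reaches S_j(t₁⁻) ≥ g_min·(min θ)/g_max; under the
similarity hypothesis, S_j(t₁⁻) + min Δ ≥ θ_j. -/
theorem stmt15 (Si Sj : ℝ → ℝ) (t0 t1 : ℝ) (ht : t0 < t1)
    (θi θj θmin θmax gmin gmax Δmin : ℝ)
    (hθi : 0 < θi) (hθj : 0 < θj)
    (hθmin : 0 < θmin) (hθmini : θmin ≤ θi) (hθminj : θmin ≤ θj)
    (hθmaxi : θi ≤ θmax) (hθmaxj : θj ≤ θmax)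
    (hg : 0 < gmin) (hgm : gmin ≤ gmax)
    (hΔmin : 0 < Δmin)
    (gi gj : ℝ → ℝ)
    (hSi : ∀ t ∈ Set.Icc t0 t1, HasDerivAt Si (gi t) t)
    (hSj : ∀ t ∈ Set.Icc t0 t1, HasDerivAt Sj (gj t) t)
    (hgi : ∀ t ∈ Set.Icc t0 t1, gi t ≤ gmax)
    (hgj : ∀ t ∈ Set.Icc t0 t1, gmin ≤ gj t)
    (hSi0 : Si t0 = 0) (hSj0 : Sj t0 = 0)
    (hSi1 : Si t1 = θi) :
    Sj t1 ≥ gmin * θmin / gmax ∧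
    ((θmin * gmin) / (θmax * gmax) > 1 - Δmin / θmax → Sj t1 + Δmin ≥ θj) := by
  have hgmax : 0 < gmax := lt_of_lt_of_le hg hgm
  have hsub : interior (Set.Icc t0 t1) ⊆ Set.Icc t0 t1 := interior_subset
  have hconv : Convex ℝ (Set.Icc t0 t1) := convex_Icc t0 t1
  have hcSi : ContinuousOn Si (Set.Icc t0 t1) := fun x hx =>
    (hSi x hx).continuousAt.continuousWithinAt
  have hcSj : ContinuousOn Sj (Set.Icc t0 t1) := fun x hx =>
    (hSj x hx).continuousAt.continuousWithinAt
  have hdSi : DifferentiableOn ℝ Si (interior (Set.Icc t0 t1)) := fun x hx =>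
    ((hSi x (hsub hx)).differentiableAt).differentiableWithinAt
  have hdSj : DifferentiableOn ℝ Sj (interior (Set.Icc t0 t1)) := fun x hx =>
    ((hSj x (hsub hx)).differentiableAt).differentiableWithinAt
  have ht0 : t0 ∈ Set.Icc t0 t1 := Set.left_mem_Icc.2 ht.le
  have ht1 : t1 ∈ Set.Icc t0 t1 := Set.right_mem_Icc.2 ht.le
  -- upper bound from Si
  have hub : Si t1 - Si t0 ≤ gmax * (t1 - t0) := by
    apply hconv.image_sub_le_mul_sub_of_deriv_le hcSi hdSi
      (fun x hx => ?_) t0 ht0 t1 ht1 ht.le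
    rw [(hSi x (hsub hx)).deriv]
    exact hgi x (hsub hx)
  have hΔt : θi / gmax ≤ t1 - t0 := by
    rw [div_le_iff₀ hgmax]
    rw [hSi0, hSi1, sub_zero] at hub
    linarith [hub]
  -- lower bound from Sj
  have hlb : gmin * (t1 - t0) ≤ Sj t1 - Sj t0 := by
    apply hconv.mul_sub_le_image_sub_of_le_deriv hcSj hdSj
      (fun x hx => ?_) t0 ht0 t1 ht1 ht.le
    rw [(hSj x (hsub hx)).deriv]
    exact hgj x (hsub hx)
  rw [hSj0, sub_zero] at hlb
  have key : gmin * θmin / gmax ≤ Sj t1 := by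
    calc gmin * θmin / gmax ≤ gmin * θi / gmax := by gcongr
        _ = gmin * (θi / gmax) := by ring
        _ ≤ gmin * (t1 - t0) := by
          exact mul_le_mul_of_nonneg_left hΔt hg.le
        _ ≤ Sj t1 := hlb
  refine ⟨key, fun hsim => ?_⟩
  have hθmax : 0 < θmax := lt_of_lt_of_le hθmin (le_trans hθminj hθmaxj)
  -- from hsim: θmin*gmin/gmax > θmax - Δmin
  have h1 : θmin * gmin / gmax > θmax - Δmin := by
    have h2 : θmax * (1 - Δmin / θmax) < θmax * (θmin * gmin / (θmax * gmax)) :=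
      mul_lt_mul_of_pos_left hsim hθmax
    have e1 : θmax * (1 - Δmin / θmax) = θmax - Δmin := by field_simp
    have e2 : θmax * (θmin * gmin / (θmax * gmax)) = θmin * gmin / gmax := by
      field_simp
    rw [e1, e2] at h2; exact h2
  have : gmin * θmin / gmax = θmin * gmin / gmax := by ring
  linarith [key, hθmaxj]
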